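/- Variance recursion for moving-average estimators (Lemma 3). Let h : ℝ^d → ℝ^k be C-Lipschitz, let β ∈ (0,1], let w, w' ∈ ℝ^d and m₀ ∈ ℝ^k be fixed, and let X be an ℝ^k-valued random vector on a probability space with E[X] = h(w) and E[‖X‖²] < ∞. Define M₁ = (1−β)m₀ + βX. Then E[‖M₁ − h(w)‖²] ≤ (1−β)‖m₀ − h(w')‖² + β² E[‖X − h(w)‖²] + (2C²/β)‖w − w'‖². -/

import Mathlib

open MeasureTheory

lemma aux_var_rec (β s q r : ℝ) (hβ0 : 0 < β) (hβ1 : β ≤ 1)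
    (hs : 0 ≤ s) (hr : 0 ≤ r) (hq : 0 ≤ q) (hqsr : q ≤ s + r) :
    (1 - β) ^ 2 * q ^ 2 ≤ (1 - β) * s ^ 2 + 2 / β * r ^ 2 := by
  have hq2 : q ^ 2 ≤ (s + r) ^ 2 := by nlinarith
  have e1 : 2 * β * (1 - β) * s * r ≤ β ^ 2 * s ^ 2 + (1 - β) ^ 2 * r ^ 2 := by
    nlinarith [sq_nonneg (β * s - (1 - β) * r)]
  have e2 : (1 - β) * (2 * β * (1 - β) * s * r)
      ≤ (1 - β) * (β ^ 2 * s ^ 2 + (1 - β) ^ 2 * r ^ 2) :=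
    mul_le_mul_of_nonneg_left e1 (by linarith)
  have hm : β * (1 - β) ^ 2 * q ^ 2 ≤ β * (1 - β) ^ 2 * (s + r) ^ 2 :=
    mul_le_mul_of_nonneg_left hq2 (by positivity)
  have h3 : (1 - β) ^ 2 * r ^ 2 ≤ 1 * r ^ 2 :=
    mul_le_mul_of_nonneg_right (by nlinarith) (sq_nonneg r)
  have h2 : β * ((1 - β) ^ 2 * q ^ 2) ≤ β * ((1 - β) * s ^ 2) + 2 * r ^ 2 := by
    nlinarith [e2, hm, h3, sq_nonneg r]
  rw [show (2 / β) * r ^ 2 = 2 * r ^ 2 / β by ring, ← sub_le_iff_le_add',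
    le_div_iff₀ hβ0]
  nlinarith

/-- Variance recursion for moving-average estimators (Lemma 3). -/
theorem variance_recursion
    (d k : ℕ) (C : ℝ) (hC : 0 ≤ C)
    (h : EuclideanSpace ℝ (Fin d) → EuclideanSpace ℝ (Fin k))
    (hlip : ∀ x y, ‖h x - h y‖ ≤ C * ‖x - y‖)
    (β : ℝ) (hβ : β ∈ Set.Ioc (0 : ℝ) 1)
    (w w' : EuclideanSpace ℝ (Fin d)) (m₀ : EuclideanSpace ℝ (Fin k))
    (Ω₀ : Type*) [MeasurableSpace Ω₀] (μ : Measure Ω₀) [IsProbabilityMeasure μ]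
    (X : Ω₀ → EuclideanSpace ℝ (Fin k))
    (hXint : Integrable X μ)
    (hXmean : ∫ ω, X ω ∂μ = h w)
    (hX2 : Integrable (fun ω => ‖X ω‖ ^ 2) μ) :
    ∫ ω, ‖((1 - β) • m₀ + β • X ω) - h w‖ ^ 2 ∂μ
      ≤ (1 - β) * ‖m₀ - h w'‖ ^ 2 + β ^ 2 * ∫ ω, ‖X ω - h w‖ ^ 2 ∂μ
        + (2 * C ^ 2 / β) * ‖w - w'‖ ^ 2 := by
  obtain ⟨hβ0, hβ1⟩ := hβ
  set v : EuclideanSpace ℝ (Fin k) := h w with hv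
  set u : EuclideanSpace ℝ (Fin k) := m₀ - v with hu
  set Y : Ω₀ → EuclideanSpace ℝ (Fin k) := fun ω => X ω - v with hYdef
  have hYint : Integrable Y μ := hXint.sub (integrable_const v)
  have hYmean : ∫ ω, Y ω ∂μ = 0 := by
    rw [integral_sub hXint (integrable_const v), hXmean, integral_const]
    simp
  have hY2 : Integrable (fun ω => ‖Y ω‖ ^ 2) μ := by
    apply Integrable.mono' ((hX2.const_mul 2).add (integrable_const (2 * ‖v‖ ^ 2)))
    · exact ((continuous_norm.pow 2).comp_aestronglyMeasurable hYint.aestronglyMeasurable)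
    · filter_upwards with ω
      have h1 : ‖Y ω‖ ≤ ‖X ω‖ + ‖v‖ := norm_sub_le _ _
      have h0 : (0:ℝ) ≤ ‖Y ω‖ := norm_nonneg _
      simp only [Pi.add_apply, Real.norm_eq_abs, abs_of_nonneg (sq_nonneg ‖Y ω‖)]
      have h2 : ‖Y ω‖ ^ 2 ≤ (‖X ω‖ + ‖v‖) ^ 2 := pow_le_pow_left₀ h0 h1 2
      nlinarith [sq_nonneg (‖X ω‖ - ‖v‖)]
  have key : ∀ ω, ‖((1 - β) • m₀ + β • X ω) - v‖ ^ 2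
      = (1 - β) ^ 2 * ‖u‖ ^ 2 + (2 * (1 - β) * β) * (inner ℝ u (Y ω) : ℝ)
        + β ^ 2 * ‖Y ω‖ ^ 2 := by
    intro ω
    have heq : ((1 - β) • m₀ + β • X ω) - v = (1 - β) • u + β • (Y ω) := by
      rw [hu, hYdef]; module
    rw [heq, norm_add_sq_real, inner_smul_left, inner_smul_right, norm_smul, norm_smul]
    simp only [RCLike.star_def, conj_trivial, Real.norm_eq_abs]
    rw [mul_pow, mul_pow, sq_abs, sq_abs]
    ring
  have hinner : Integrable (fun ω => (inner ℝ u (Y ω) : ℝ)) μ := hYint.const_inner u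
  have hint_eq : ∫ ω, ‖((1 - β) • m₀ + β • X ω) - v‖ ^ 2 ∂μ
      = (1 - β) ^ 2 * ‖u‖ ^ 2 + β ^ 2 * ∫ ω, ‖Y ω‖ ^ 2 ∂μ := by
    simp only [key]
    have i0 : Integrable (fun _ : Ω₀ => (1 - β) ^ 2 * ‖u‖ ^ 2) μ := integrable_const _
    have ii : Integrable (fun ω => 2 * (1 - β) * β * (inner ℝ u (Y ω) : ℝ)) μ :=
      hinner.const_mul _
    have i2 : Integrable (fun ω => β ^ 2 * ‖Y ω‖ ^ 2) μ := hY2.const_mul _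
    have i01 : Integrable (fun ω => (1 - β) ^ 2 * ‖u‖ ^ 2
        + 2 * (1 - β) * β * (inner ℝ u (Y ω) : ℝ)) μ := i0.add ii
    rw [integral_add i01 i2, integral_add i0 ii, integral_const,
      integral_const_mul, integral_const_mul, integral_inner hYint, hYmean]
    simp
  rw [hint_eq]
  have hnorm : ‖u‖ ≤ ‖m₀ - h w'‖ + C * ‖w - w'‖ := by
    have : u = (m₀ - h w') + (h w' - h w) := by rw [hu, hv]; abel
    calc ‖u‖ ≤ ‖m₀ - h w'‖ + ‖h w' - h w‖ := by rw [this]; exact norm_add_le _ _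
      _ ≤ ‖m₀ - h w'‖ + C * ‖w' - w‖ := by linarith [hlip w' w]
      _ = ‖m₀ - h w'‖ + C * ‖w - w'‖ := by rw [norm_sub_rev w' w]
  have haux := aux_var_rec β ‖m₀ - h w'‖ ‖u‖ (C * ‖w - w'‖) hβ0 hβ1
    (norm_nonneg _) (mul_nonneg hC (norm_nonneg _)) (norm_nonneg _) hnorm
  have hfinal : 2 / β * (C * ‖w - w'‖) ^ 2 = 2 * C ^ 2 / β * ‖w - w'‖ ^ 2 := by ring
  linarith [haux, hfinal.le, hfinal.ge]
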